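/- Let A and B be nonempty finite subsets of ℂ with A ∩ B = ∅. Then the sets {z ∈ ℂ | ∃ a ∈ A, ∃ k ∈ ℕ, z = −a − 2k} and {z ∈ ℂ | ∃ b ∈ B, ∃ k ∈ ℕ, z = −b − 2k} are not equal. (These sets are the supports of the polar divisors of the products ∏_{a∈A} Γ_ℝ((s+a)/2) and ∏_{b∈B} Γ_ℝ((s+b)/2), where Γ_ℝ(s) = π^{−s/2}Γ(s/2); this is the Baby Lemma of Section 4: two such products with disjoint shift sets cannot have the same polar divisor.) -/
import Mathlib

lemma stmt3_aux (A B : Finset ℂ) (hAB : Disjoint A B) (a0 : ℂ) (ha0 : a0 ∈ A)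
    (hmin : ∀ b ∈ B, a0.re ≤ b.re)
    (heq : {z : ℂ | ∃ a ∈ A, ∃ k : ℕ, z = -a - 2 * k} =
      {z : ℂ | ∃ b ∈ B, ∃ k : ℕ, z = -b - 2 * k}) : False := by
  have hmem : (-a0 : ℂ) ∈ {z : ℂ | ∃ a ∈ A, ∃ k : ℕ, z = -a - 2 * k} :=
    ⟨a0, ha0, 0, by simp⟩
  rw [heq] at hmem
  obtain ⟨b, hb, k, hk⟩ := hmem
  have hre : a0.re = b.re + 2 * k := by
    have := congrArg Complex.re hk
    simp [Complex.sub_re, Complex.mul_re] at this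
    linarith
  have hk0 : k = 0 := by
    have := hmin b hb
    have : (2 : ℝ) * k ≤ 0 := by linarith
    have : (k : ℝ) ≤ 0 := by linarith
    exact_mod_cast le_antisymm (by exact_mod_cast this) (Nat.zero_le k)
  subst hk0
  have : a0 = b := by
    have := hk
    simp at this
    exact this
  subst this
  exact (Finset.disjoint_left.mp hAB ha0) hb

theorem stmt3 (A B : Finset ℂ) (hA : A.Nonempty) (hB : B.Nonempty)
    (hAB : Disjoint A B) :
    {z : ℂ | ∃ a ∈ A, ∃ k : ℕ, z = -a - 2 * k} ≠
      {z : ℂ | ∃ b ∈ B, ∃ k : ℕ, z = -b - 2 * k} := by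
  intro heq
  obtain ⟨a0, ha0, hmin⟩ := Finset.exists_min_image (A ∪ B) Complex.re
    (hA.mono Finset.subset_union_left)
  rcases Finset.mem_union.mp ha0 with h | h
  · exact stmt3_aux A B hAB a0 h
      (fun b hb => hmin b (Finset.mem_union_right _ hb)) heq
  · exact stmt3_aux B A hAB.symm a0 h
      (fun b hb => hmin b (Finset.mem_union_left _ hb)) heq.symm
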